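/- Fix an integer s ≥ 2 and p ∈ (0,1). Let X_1, X_2, … be an i.i.d. sequence of random variables with the Log-Logistic(α;0,1) distribution, α > 0, and for each i ∈ ℕ let Q_{i,s}^{LL} = (1/2)·log(X_{(is, i(s+1)−1)}/X_{(i, i(s+1)−1)})/(H_{is−1} − H_{i−1}) be computed from the first n = i(s+1)−1 observations, and set F̂_{i,s,LL}^←(p) = (p/(1−p))^{Q_{i,s}^{LL}}. Then F̂_{i,s,LL}^←(p) converges almost surely, as i → ∞, to the theoretical quantile F_X^←(p) = (p/(1−p))^{1/α}. -/

import Mathlib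

open MeasureTheory ProbabilityTheory Real Filter
open Topology

/-- The `k`-th order statistic (1-based indexing) of the sample `x : Fin n → ℝ`. -/
noncomputable def orderStat (n : ℕ) (x : Fin n → ℝ) (k : ℕ) : ℝ :=
  (Multiset.sort ((List.ofFn x : List ℝ) : Multiset ℝ) (· ≤ ·)).getD (k - 1) 0

/-- The cumulative distribution function of the Log-Logistic(α; 0, 1) distribution. -/
noncomputable def logLogisticCDF (α : ℝ) (x : ℝ) : ℝ :=
  if 0 < x then 1 / (1 + x ^ (-α)) else 0

section Aux

lemma sorted_getD_le_iff : ∀ (l : List ℝ), l.Pairwise (· ≤ ·) → ∀ k : ℕ, 1 ≤ k → k ≤ l.length →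
    ∀ t : ℝ, (l.getD (k-1) 0 ≤ t ↔ k ≤ l.countP (fun a => a ≤ t)) := by
  intro l
  induction l with
  | nil => intro _ k hk1 hkl t; simp at hkl; omega
  | cons a l ih =>
    intro hsort k hk1 hkl t
    rcases Nat.lt_or_ge k 2 with hk2 | hk2
    · have hk : k = 1 := by omega
      subst hk
      have h0 : (a :: l).getD (1-1) 0 = a := rfl
      rw [h0, List.countP_cons]
      by_cases hat : a ≤ t
      · rw [show (decide (a ≤ t)) = true from decide_eq_true hat, if_pos rfl]
        constructor
        · intro _; omega
        · intro _; exact hat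
      · rw [show (decide (a ≤ t)) = false from decide_eq_false hat, if_neg (by simp), Nat.add_zero]
        constructor
        · intro h; exact absurd h hat
        · intro h
          obtain ⟨x, hxl, hxt⟩ := List.countP_pos_iff.mp
            (by omega : 0 < l.countP (fun a => decide (a ≤ t)))
          exact absurd (le_trans (List.rel_of_pairwise_cons hsort hxl) (by simpa using hxt)) hat
    · obtain ⟨m, rfl⟩ : ∃ m, k = m + 2 := ⟨k - 2, by omega⟩
      have hlen : m + 1 ≤ l.length := by simp at hkl; omega
      have hD : (a :: l).getD (m + 2 - 1) 0 = l.getD m 0 := rfl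
      rw [hD, List.countP_cons]
      by_cases hat : a ≤ t
      · rw [show (decide (a ≤ t)) = true from decide_eq_true hat, if_pos rfl]
        have h2 := ih hsort.tail (m+1) (by omega) hlen t
        have hD2 : l.getD (m+1-1) 0 = l.getD m 0 := rfl
        rw [hD2] at h2
        rw [h2]; omega
      · rw [show (decide (a ≤ t)) = false from decide_eq_false hat, if_neg (by simp), Nat.add_zero]
        have hc0 : l.countP (fun a => decide (a ≤ t)) = 0 := by
          apply List.countP_eq_zero.mpr
          intro x hxl
          simp only [decide_eq_true_eq]
          intro hxt
          exact hat (le_trans (List.rel_of_pairwise_cons hsort hxl) hxt)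
        rw [hc0]
        constructor
        · intro h
          exfalso
          have hm : m < l.length := by omega
          rw [List.getD_eq_getElem _ _ hm] at h
          exact hat (le_trans (List.rel_of_pairwise_cons hsort (List.getElem_mem hm)) h)
        · omega

lemma orderStat_le_iff (n : ℕ) (x : Fin n → ℝ) (k : ℕ) (hk1 : 1 ≤ k) (hkn : k ≤ n) (t : ℝ) :
    orderStat n x k ≤ t ↔ k ≤ (List.ofFn x).countP (fun a => a ≤ t) := by
  unfold orderStat
  have hperm : (Multiset.sort ((List.ofFn x : List ℝ) : Multiset ℝ) (· ≤ ·)).Perm (List.ofFn x) :=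
    Multiset.coe_eq_coe.mp (by rw [Multiset.sort_eq])
  rw [sorted_getD_le_iff _ (Multiset.pairwise_sort ..) k hk1
    (by rw [hperm.length_eq, List.length_ofFn]; exact hkn), hperm.countP_eq]

lemma countP_ofFn : ∀ (m : ℕ) (x : ℕ → ℝ) (t : ℝ),
    (((List.ofFn fun j : Fin m => x j).countP (fun a => a ≤ t) : ℕ) : ℝ) =
      ∑ j ∈ Finset.range m, (if x j ≤ t then (1:ℝ) else 0) := by
  intro m
  induction m with
  | zero => intro x t; simp
  | succ m ih =>
    intro x t
    rw [List.ofFn_succ, List.countP_cons, Finset.sum_range_succ']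
    have := ih (fun j => x (j+1)) t
    simp only [Fin.val_succ] at *
    push_cast
    rw [this]
    by_cases h : x 0 ≤ t <;> simp [h]

lemma F_xi {α q : ℝ} (hα : 0 < α) (hq : q ∈ Set.Ioo (0:ℝ) 1) :
    logLogisticCDF α ((q/(1-q)) ^ (1/α)) = q := by
  obtain ⟨hq0, hq1⟩ := hq
  have h1q : 0 < 1 - q := by linarith
  have hc : 0 < q / (1 - q) := div_pos hq0 h1q
  unfold logLogisticCDF
  rw [if_pos (rpow_pos_of_pos hc _)]
  rw [← Real.rpow_mul hc.le]
  have hexp : 1 / α * (-α) = -1 := by field_simp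
  rw [hexp, Real.rpow_neg_one]
  rw [show (q / (1 - q))⁻¹ = (1 - q) / q from by rw [inv_div]]
  rw [show 1 + (1 - q) / q = 1 / q from by field_simp; ring]
  simp

lemma F_lt {α : ℝ} (hα : 0 < α) {a b : ℝ} (ha : 0 < a) (hab : a < b) :
    logLogisticCDF α a < logLogisticCDF α b := by
  unfold logLogisticCDF
  rw [if_pos ha, if_pos (ha.trans hab)]
  have h1 : b ^ (-α) < a ^ (-α) := Real.rpow_lt_rpow_of_neg ha hab (neg_lt_zero.mpr hα)
  have hb' : (0:ℝ) < b ^ (-α) := rpow_pos_of_pos (ha.trans hab) _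
  have hb : 0 < 1 + b ^ (-α) := by linarith
  exact one_div_lt_one_div_of_lt hb (by linarith)

lemma F_nonneg {α : ℝ} (x : ℝ) : 0 ≤ logLogisticCDF α x := by
  unfold logLogisticCDF
  split_ifs with h
  · have : (0:ℝ) < x ^ (-α) := rpow_pos_of_pos h _
    positivity
  · exact le_refl 0

lemma quantile_tendsto {α : ℝ} (hα : 0 < α) (x : ℕ → ℝ) {q : ℝ} (hq : q ∈ Set.Ioo (0:ℝ) 1)
    (k n : ℕ → ℕ)
    (hkn : ∀ᶠ i in atTop, 1 ≤ k i ∧ k i ≤ n i)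
    (hn : Tendsto n atTop atTop)
    (hratio : Tendsto (fun i => (k i : ℝ) / (n i : ℝ)) atTop (𝓝 q))
    (hemp : ∀ t : ℚ, Tendsto (fun m =>
      (((List.ofFn fun j : Fin m => x j).countP (fun a => a ≤ (t:ℝ)) : ℕ) : ℝ) / m)
      atTop (𝓝 (logLogisticCDF α t))) :
    Tendsto (fun i => orderStat (n i) (fun j : Fin (n i) => x j) (k i)) atTop
      (𝓝 ((q/(1-q)) ^ (1/α))) := by
  obtain ⟨hq0, hq1⟩ := hq
  set ξ : ℝ := (q/(1-q)) ^ (1/α) with hξdef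
  have hξ : 0 < ξ := rpow_pos_of_pos (div_pos hq0 (by linarith)) _
  have hFξ : logLogisticCDF α ξ = q := F_xi hα ⟨hq0, hq1⟩
  rw [tendsto_order]
  constructor
  · intro b hb
    obtain ⟨t, ht1, ht2⟩ := exists_rat_btwn (show max b 0 < ξ from max_lt hb hξ)
    have ht0 : (0:ℝ) < t := lt_of_le_of_lt (le_max_right b 0) ht1
    have hFt : logLogisticCDF α (t:ℝ) < q := hFξ ▸ F_lt hα ht0 ht2
    set mid := (logLogisticCDF α (t:ℝ) + q) / 2 with hmid
    have h1 : ∀ᶠ i in atTop,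
        (((List.ofFn fun j : Fin (n i) => x j).countP (fun a => a ≤ (t:ℝ)) : ℕ) : ℝ) / (n i)
          < mid :=
      ((hemp t).comp hn).eventually_lt_const (by rw [hmid]; linarith)
    have h2 : ∀ᶠ i in atTop, mid < (k i : ℝ) / (n i : ℝ) :=
      hratio.eventually_const_lt (by rw [hmid]; linarith)
    filter_upwards [h1, h2, hkn] with i h1i h2i ⟨hk1, hk2⟩
    have hnpos : (0:ℝ) < (n i : ℝ) := by
      have : 1 ≤ n i := le_trans hk1 hk2
      exact_mod_cast Nat.lt_of_lt_of_le Nat.zero_lt_one this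
    have hlt : (((List.ofFn fun j : Fin (n i) => x j).countP (fun a => a ≤ (t:ℝ)) : ℕ) : ℝ)
        < (k i : ℝ) := by
      have := h1i.trans h2i
      exact (div_lt_div_iff_of_pos_right hnpos).mp this
    have hcnt : (List.ofFn fun j : Fin (n i) => x j).countP (fun a => a ≤ (t:ℝ)) < k i := by
      exact_mod_cast hlt
    have : ¬ orderStat (n i) (fun j : Fin (n i) => x j) (k i) ≤ (t:ℝ) := by
      rw [orderStat_le_iff _ _ _ hk1 hk2]
      omega
    have := lt_of_not_ge this
    exact lt_trans (lt_of_le_of_lt (le_max_left b 0) ht1) this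
  · intro b hb
    obtain ⟨t, ht1, ht2⟩ := exists_rat_btwn hb
    have hFt : q < logLogisticCDF α (t:ℝ) := hFξ ▸ F_lt hα hξ ht1
    set mid := (q + logLogisticCDF α (t:ℝ)) / 2 with hmid
    have h1 : ∀ᶠ i in atTop, (k i : ℝ) / (n i : ℝ) < mid :=
      hratio.eventually_lt_const (by rw [hmid]; linarith)
    have h2 : ∀ᶠ i in atTop, mid <
        (((List.ofFn fun j : Fin (n i) => x j).countP (fun a => a ≤ (t:ℝ)) : ℕ) : ℝ) / (n i) :=
      ((hemp t).comp hn).eventually_const_lt (by rw [hmid]; linarith)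
    filter_upwards [h1, h2, hkn] with i h1i h2i ⟨hk1, hk2⟩
    have hnpos : (0:ℝ) < (n i : ℝ) := by
      have : 1 ≤ n i := le_trans hk1 hk2
      exact_mod_cast Nat.lt_of_lt_of_le Nat.zero_lt_one this
    have hlt : (k i : ℝ) <
        (((List.ofFn fun j : Fin (n i) => x j).countP (fun a => a ≤ (t:ℝ)) : ℕ) : ℝ) := by
      have := h1i.trans h2i
      exact (div_lt_div_iff_of_pos_right hnpos).mp this
    have hcnt : k i ≤ (List.ofFn fun j : Fin (n i) => x j).countP (fun a => a ≤ (t:ℝ)) := by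
      have h : k i < (List.ofFn fun j : Fin (n i) => x j).countP
          (fun a => decide (a ≤ (t:ℝ))) := by
        exact_mod_cast hlt
      omega
    have := (orderStat_le_iff _ _ _ hk1 hk2 (t:ℝ)).mpr hcnt
    exact lt_of_le_of_lt this ht2

lemma emp_ae {Ω : Type*} [MeasurableSpace Ω] (μ : Measure Ω) [IsProbabilityMeasure μ]
    {α : ℝ}
    (X : ℕ → Ω → ℝ) (hmeas : ∀ k, Measurable (X k))
    (hindep : iIndepFun X μ)
    (hdist : ∀ k x, μ {ω | X k ω ≤ x} = ENNReal.ofReal (logLogisticCDF α x)) :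
    ∀ᵐ ω ∂μ, ∀ t : ℚ, Tendsto (fun m =>
      (((List.ofFn fun j : Fin m => X j ω).countP (fun a => a ≤ (t:ℝ)) : ℕ) : ℝ) / m)
      atTop (𝓝 (logLogisticCDF α t)) := by
  rw [ae_all_iff]
  intro t
  set f : ℝ → ℝ := fun u => if u ≤ (t:ℝ) then 1 else 0 with hf_def
  have hf : Measurable f := by
    exact Measurable.ite measurableSet_Iic measurable_const measurable_const
  set Y : ℕ → Ω → ℝ := fun j ω => f (X j ω) with hY_def
  have hYmeas : ∀ j, Measurable (Y j) := fun j => hf.comp (hmeas j)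
  have hYint : Integrable (Y 0) μ := by
    have hA : MeasurableSet {ω | X 0 ω ≤ (t:ℝ)} := (hmeas 0) measurableSet_Iic
    have : Y 0 = Set.indicator {ω | X 0 ω ≤ (t:ℝ)} (fun _ => (1:ℝ)) := by
      funext ω
      rw [Set.indicator_apply]
      by_cases h : X 0 ω ≤ (t:ℝ) <;> simp [hY_def, hf_def, h, Set.mem_setOf_eq]
    rw [this]
    exact (integrable_const 1).indicator hA
  have hident : ∀ i, IdentDistrib (X i) (X 0) μ μ := by
    intro i
    refine ⟨(hmeas i).aemeasurable, (hmeas 0).aemeasurable, ?_⟩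
    haveI : IsProbabilityMeasure (Measure.map (X i) μ) :=
      Measure.isProbabilityMeasure_map (hmeas i).aemeasurable
    apply MeasureTheory.Measure.ext_of_Iic
    intro a
    rw [Measure.map_apply (hmeas i) measurableSet_Iic,
      Measure.map_apply (hmeas 0) measurableSet_Iic]
    show μ {ω | X i ω ≤ a} = μ {ω | X 0 ω ≤ a}
    rw [hdist i a, hdist 0 a]
  have hYindep : Pairwise (Function.onFun (IndepFun · · μ) Y) := fun i j hij =>
    (hindep.indepFun hij).comp hf hf
  have hYident : ∀ i, IdentDistrib (Y i) (Y 0) μ μ := fun i => (hident i).comp hf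
  have hint : μ[Y 0] = logLogisticCDF α t := by
    have hA : MeasurableSet {ω | X 0 ω ≤ (t:ℝ)} := (hmeas 0) measurableSet_Iic
    have h1 : Y 0 = Set.indicator {ω | X 0 ω ≤ (t:ℝ)} (fun _ => (1:ℝ)) := by
      funext ω
      rw [Set.indicator_apply]
      by_cases h : X 0 ω ≤ (t:ℝ) <;> simp [hY_def, hf_def, h, Set.mem_setOf_eq]
    rw [h1, integral_indicator_const _ hA, measureReal_def, hdist 0 t, smul_eq_mul, mul_one,
      ENNReal.toReal_ofReal (F_nonneg _)]
  have := strong_law_ae_real Y hYint hYindep hYident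
  rw [hint] at this
  filter_upwards [this] with ω hω
  have heq : (fun m : ℕ => (((List.ofFn fun j : Fin m => X j ω).countP
      (fun a => a ≤ (t:ℝ)) : ℕ) : ℝ) / m) = fun m : ℕ => (∑ i ∈ Finset.range m, Y i ω) / m := by
    funext m
    rw [countP_ofFn m (fun j => X j ω) (t:ℝ)]
  rw [heq]
  exact hω

lemma inv_nat_tendsto : Tendsto (fun i : ℕ => (1:ℝ)/i) atTop (𝓝 0) :=
  tendsto_one_div_atTop_nhds_zero_nat

lemma ratio1_tendsto {s : ℕ} (hs : 2 ≤ s) :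
    Tendsto (fun i : ℕ => ((i*s : ℕ) : ℝ) / ((i*(s+1)-1 : ℕ) : ℝ)) atTop
      (𝓝 ((s:ℝ)/(s+1))) := by
  have key : Tendsto (fun i : ℕ => ((s:ℝ))/((s+1) - 1/i)) atTop (𝓝 ((s:ℝ)/(s+1))) := by
    have h1 : Tendsto (fun i : ℕ => ((s:ℝ)+1) - 1/i) atTop (𝓝 ((s:ℝ)+1)) := by
      simpa using (tendsto_const_nhds (x := (s:ℝ)+1)).sub inv_nat_tendsto
    exact tendsto_const_nhds.div h1 (by positivity)
  apply key.congr'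
  filter_upwards [eventually_ge_atTop 1] with i hi
  have hi' : (1:ℝ) ≤ i := by exact_mod_cast hi
  have hs' : (2:ℝ) ≤ s := by exact_mod_cast hs
  have hle : 1 ≤ i*(s+1) := Nat.one_le_iff_ne_zero.mpr (by positivity)
  rw [Nat.cast_sub hle]
  push_cast
  have hipos : (0:ℝ) < i := by linarith
  have hd1 : (0:ℝ) < (s:ℝ)+1 - 1/i := by
    have : (1:ℝ)/i ≤ 1 := by rw [div_le_one hipos]; exact hi'
    linarith
  have hd2 : (0:ℝ) < (i:ℝ)*(s+1) - 1 := by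
    have := mul_le_mul_of_nonneg_right hi' (by linarith : (0:ℝ) ≤ (s:ℝ)+1)
    linarith
  rw [div_eq_div_iff hd1.ne' hd2.ne']
  field_simp

lemma ratio2_tendsto {s : ℕ} (hs : 2 ≤ s) :
    Tendsto (fun i : ℕ => ((i : ℕ) : ℝ) / ((i*(s+1)-1 : ℕ) : ℝ)) atTop
      (𝓝 ((1:ℝ)/(s+1))) := by
  have key : Tendsto (fun i : ℕ => (1:ℝ)/((s+1) - 1/i)) atTop (𝓝 ((1:ℝ)/(s+1))) := by
    have h1 : Tendsto (fun i : ℕ => ((s:ℝ)+1) - 1/i) atTop (𝓝 ((s:ℝ)+1)) := by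
      simpa using (tendsto_const_nhds (x := (s:ℝ)+1)).sub inv_nat_tendsto
    exact tendsto_const_nhds.div h1 (by positivity)
  apply key.congr'
  filter_upwards [eventually_ge_atTop 1] with i hi
  have hi' : (1:ℝ) ≤ i := by exact_mod_cast hi
  have hs' : (2:ℝ) ≤ s := by exact_mod_cast hs
  have hle : 1 ≤ i*(s+1) := Nat.one_le_iff_ne_zero.mpr (by positivity)
  rw [Nat.cast_sub hle]
  push_cast
  have hipos : (0:ℝ) < i := by linarith
  have hd1 : (0:ℝ) < (s:ℝ)+1 - 1/i := by
    have : (1:ℝ)/i ≤ 1 := by rw [div_le_one hipos]; exact hi'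
    linarith
  have hd2 : (0:ℝ) < (i:ℝ)*(s+1) - 1 := by
    have := mul_le_mul_of_nonneg_right hi' (by linarith : (0:ℝ) ≤ (s:ℝ)+1)
    linarith
  rw [div_eq_div_iff hd1.ne' hd2.ne']
  field_simp

lemma harm_diff_tendsto {s : ℕ} (hs : 2 ≤ s) :
    Tendsto (fun i : ℕ => ((harmonic (i*s-1) : ℝ) - (harmonic (i-1) : ℝ))) atTop
      (𝓝 (Real.log s)) := by
  have h1 : Tendsto (fun i : ℕ => i*s-1) atTop atTop := by
    apply tendsto_atTop_mono (fun i => ?_) tendsto_id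
    have := Nat.mul_le_mul_left i hs
    simp only [id]
    omega
  have h2 : Tendsto (fun i : ℕ => i-1) atTop atTop := tendsto_sub_atTop_nat 1
  have hA := Real.tendsto_harmonic_sub_log.comp h1
  have hB := Real.tendsto_harmonic_sub_log.comp h2
  have hq : Tendsto (fun i : ℕ => ((i*s-1:ℕ):ℝ) / ((i-1:ℕ):ℝ)) atTop (𝓝 (s:ℝ)) := by
    have key : Tendsto (fun i : ℕ => ((s:ℝ) - 1/i)/(1 - 1/i)) atTop (𝓝 (s:ℝ)) := by
      have hn : Tendsto (fun i : ℕ => (s:ℝ) - 1/i) atTop (𝓝 (s:ℝ)) := by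
        simpa using (tendsto_const_nhds (x := (s:ℝ))).sub inv_nat_tendsto
      have hd : Tendsto (fun i : ℕ => (1:ℝ) - 1/i) atTop (𝓝 (1:ℝ)) := by
        simpa using (tendsto_const_nhds (x := (1:ℝ))).sub inv_nat_tendsto
      have h := hn.div hd one_ne_zero; rw [div_one (s:ℝ)] at h; exact h
    apply key.congr'
    filter_upwards [eventually_ge_atTop 2] with i hi
    have hi' : (2:ℝ) ≤ i := by exact_mod_cast hi
    have hle1 : 1 ≤ i*s := by nlinarith [Nat.mul_le_mul_left i hs, (by omega : 1 ≤ i)]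
    rw [Nat.cast_sub hle1, Nat.cast_sub (by omega : 1 ≤ i)]
    push_cast
    have hipos : (0:ℝ) < i := by linarith
    have hd1 : (0:ℝ) < 1 - 1/i := by
      have h12 : (1:ℝ)/i ≤ 1/2 := by
        apply div_le_div_of_nonneg_left (by norm_num) (by norm_num) hi'
      linarith
    have hd2 : (0:ℝ) < (i:ℝ) - 1 := by linarith
    rw [div_eq_div_iff hd1.ne' hd2.ne']
    field_simp
  have hs0 : (0:ℝ) < s := by positivity
  have hlog : Tendsto (fun i : ℕ => Real.log (((i*s-1:ℕ):ℝ) / ((i-1:ℕ):ℝ))) atTop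
      (𝓝 (Real.log s)) := ((Real.continuousAt_log (ne_of_gt hs0)).tendsto).comp hq
  have total := (hA.sub hB).add hlog
  simp only [sub_self, zero_add] at total
  apply total.congr'
  filter_upwards [eventually_ge_atTop 2] with i hi
  have hi1 : 1 ≤ i := by omega
  have hle1 : 1 ≤ i*s := by nlinarith [Nat.mul_le_mul_left i hs]
  have hA1 : (1:ℝ) ≤ ((i*s-1:ℕ):ℝ) := by
    have : 1 ≤ i*s-1 := by
      have := Nat.mul_le_mul_left i hs
      omega
    exact_mod_cast this
  have hB1 : (1:ℝ) ≤ ((i-1:ℕ):ℝ) := by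
    have : 1 ≤ i - 1 := by omega
    exact_mod_cast this
  simp only [Function.comp]
  rw [Real.log_div (by linarith) (by linarith)]
  ring

end Aux

/-- For fixed `s ≥ 2`, `p ∈ (0,1)` and an i.i.d. sequence from the
Log-Logistic(α;0,1) distribution, the quantile estimators
`(p/(1-p))^{Q_{i,s}^{LL}}`, computed from the first `n = i(s+1)-1` observations,
converge almost surely to the theoretical quantile `(p/(1-p))^{1/α}` as `i → ∞`. -/
theorem stmt6 {Ω : Type*} [MeasurableSpace Ω] (μ : Measure Ω) [IsProbabilityMeasure μ]
    (s : ℕ) (hs : 2 ≤ s) (p : ℝ) (hp : p ∈ Set.Ioo (0 : ℝ) 1)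
    (α : ℝ) (hα : 0 < α)
    (X : ℕ → Ω → ℝ) (hmeas : ∀ k, Measurable (X k))
    (hindep : iIndepFun X μ)
    (hdist : ∀ k x, μ {ω | X k ω ≤ x} = ENNReal.ofReal (logLogisticCDF α x)) :
    ∀ᵐ ω ∂μ, Tendsto (fun i : ℕ =>
        (p / (1 - p)) ^ ((1 / 2) * Real.log
          (orderStat (i * (s + 1) - 1) (fun j => X j ω) (i * s) /
            orderStat (i * (s + 1) - 1) (fun j => X j ω) i) /
          ((harmonic (i * s - 1) : ℝ) - (harmonic (i - 1) : ℝ))))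
      atTop (nhds ((p / (1 - p)) ^ (1 / α))) := by
  have hs' : (2:ℝ) ≤ s := by exact_mod_cast hs
  have hsp : (0:ℝ) < s := by linarith
  -- the two quantile levels
  have hq2 : (s:ℝ)/(s+1) ∈ Set.Ioo (0:ℝ) 1 := by
    constructor
    · positivity
    · rw [div_lt_one (by positivity)]; linarith
  have hq1 : (1:ℝ)/(s+1) ∈ Set.Ioo (0:ℝ) 1 := by
    constructor
    · positivity
    · rw [div_lt_one (by positivity)]; linarith
  have hc2 : ((s:ℝ)/(s+1)) / (1 - (s:ℝ)/(s+1)) = (s:ℝ) := by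
    rw [show (1:ℝ) - (s:ℝ)/(s+1) = 1/(s+1) from by field_simp; ring]
    field_simp
  have hc1 : ((1:ℝ)/(s+1)) / (1 - (1:ℝ)/(s+1)) = 1/(s:ℝ) := by
    have hsne : (s:ℝ) ≠ 0 := hsp.ne'
    have hs1ne : (s:ℝ)+1 ≠ 0 := by positivity
    rw [show (1:ℝ) - (1:ℝ)/(s+1) = s/(s+1) from by field_simp; ring]
    rw [div_div_div_cancel_right₀]
    exact hs1ne
  -- eventual bounds for indices
  have hkn2 : ∀ᶠ i in atTop, 1 ≤ i*s ∧ i*s ≤ i*(s+1)-1 := by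
    filter_upwards [eventually_ge_atTop 1] with i hi
    have := Nat.mul_le_mul_left i hs
    have h2 : i*(s+1) = i*s + i := by ring
    omega
  have hkn1 : ∀ᶠ i in atTop, 1 ≤ i ∧ i ≤ i*(s+1)-1 := by
    filter_upwards [eventually_ge_atTop 1] with i hi
    have := Nat.mul_le_mul_left i hs
    have h2 : i*(s+1) = i*s + i := by ring
    constructor
    · exact hi
    · omega
  have hn : Tendsto (fun i : ℕ => i*(s+1)-1) atTop atTop := by
    apply tendsto_atTop_mono (fun i => ?_) tendsto_id
    have := Nat.mul_le_mul_left i hs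
    have h2 : i*(s+1) = i*s + i := by ring
    simp only [id]
    omega
  have hemp := emp_ae μ X hmeas hindep hdist
  have hharm := harm_diff_tendsto hs
  filter_upwards [hemp] with ω hω
  -- order statistics convergence
  have hA : Tendsto (fun i : ℕ =>
      orderStat (i*(s+1)-1) (fun j : Fin (i*(s+1)-1) => X j ω) (i*s)) atTop
      (𝓝 ((s:ℝ) ^ (1/α))) := by
    have := quantile_tendsto hα (fun j => X j ω) hq2 (fun i => i*s) (fun i => i*(s+1)-1)
      hkn2 hn (ratio1_tendsto hs) hω
    rwa [hc2] at this
  have hB : Tendsto (fun i : ℕ =>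
      orderStat (i*(s+1)-1) (fun j : Fin (i*(s+1)-1) => X j ω) i) atTop
      (𝓝 ((1/(s:ℝ)) ^ (1/α))) := by
    have := quantile_tendsto hα (fun j => X j ω) hq1 (fun i => i) (fun i => i*(s+1)-1)
      hkn1 hn (ratio2_tendsto hs) hω
    rwa [hc1] at this
  have hξA : (0:ℝ) < (s:ℝ) ^ (1/α) := rpow_pos_of_pos hsp _
  have hξB : (0:ℝ) < (1/(s:ℝ)) ^ (1/α) := rpow_pos_of_pos (by positivity) _
  -- log convergence
  have hlogA : Tendsto (fun i : ℕ => Real.log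
      (orderStat (i*(s+1)-1) (fun j : Fin (i*(s+1)-1) => X j ω) (i*s))) atTop
      (𝓝 ((1/α) * Real.log s)) := by
    have := ((Real.continuousAt_log hξA.ne').tendsto).comp hA
    rwa [Real.log_rpow hsp] at this
  have hlogB : Tendsto (fun i : ℕ => Real.log
      (orderStat (i*(s+1)-1) (fun j : Fin (i*(s+1)-1) => X j ω) i)) atTop
      (𝓝 (-((1/α) * Real.log s))) := by
    have := ((Real.continuousAt_log hξB.ne').tendsto).comp hB
    rwa [Real.log_rpow (by positivity), Real.log_div one_ne_zero hsp.ne', Real.log_one,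
      zero_sub, mul_neg] at this
  have hL : Tendsto (fun i : ℕ => Real.log
      (orderStat (i*(s+1)-1) (fun j : Fin (i*(s+1)-1) => X j ω) (i*s) /
        orderStat (i*(s+1)-1) (fun j : Fin (i*(s+1)-1) => X j ω) i)) atTop
      (𝓝 ((2/α) * Real.log s)) := by
    have hsum := hlogA.sub hlogB
    have : (1/α) * Real.log s - -((1/α) * Real.log s) = (2/α) * Real.log s := by ring
    rw [this] at hsum
    apply hsum.congr'
    filter_upwards [hA.eventually_const_lt hξA, hB.eventually_const_lt hξB] with i hApos hBpos
    rw [Real.log_div hApos.ne' hBpos.ne']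
  -- exponent convergence
  have hlogs : (0:ℝ) < Real.log s := Real.log_pos (by linarith)
  have hexp : Tendsto (fun i : ℕ => (1/2) * Real.log
      (orderStat (i*(s+1)-1) (fun j : Fin (i*(s+1)-1) => X j ω) (i*s) /
        orderStat (i*(s+1)-1) (fun j : Fin (i*(s+1)-1) => X j ω) i) /
      ((harmonic (i*s-1) : ℝ) - (harmonic (i-1) : ℝ))) atTop (𝓝 (1/α)) := by
    have := (tendsto_const_nhds (x := (1:ℝ)/2).mul hL).div hharm hlogs.ne'
    have heq : (1:ℝ)/2 * ((2/α) * Real.log s) / Real.log s = 1/α := by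
      field_simp
    rwa [heq] at this
  -- final composition through rpow
  have hc : (0:ℝ) < p / (1 - p) := div_pos hp.1 (by linarith [hp.2])
  have hfin := ((Real.continuous_exp.tendsto _).comp
    (tendsto_const_nhds (x := Real.log (p/(1-p))).mul hexp))
  have hrw : ∀ y : ℝ, Real.exp (Real.log (p/(1-p)) * y) = (p/(1-p)) ^ y := fun y =>
    (Real.rpow_def_of_pos hc y).symm
  rw [show Real.exp (Real.log (p/(1-p)) * (1/α)) = (p/(1-p)) ^ ((1:ℝ)/α) from hrw _] at hfin
  apply hfin.congr
  intro i
  exact hrw _
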